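/- Let X be a bounded-degree graph, φ: X → G an injective (a,b)-rough isometry into a Cayley graph (G,S) of polynomial volume growth, and assume: (i) harmonic functions u on X satisfy u(p)² ≤ (C₁/|B_p^X(R)|)·Σ_{x∈B_p^X(R)} u(x)² for R ≥ 1; (ii) the volume comparison |B_p^X(R)| ≥ C₂|B_y^G(C₁'R)| whenever d^S(φ(p),y) ≤ b and R ≥ R₁; (iii) the volume doubling property on G. Then there exist constants C, R₀ such that for every harmonic u on X, the extended function ũ on G (defined by ũ = u∘φ⁻¹ on φ(X) and by averaging u over W_y = φ⁻¹(φ(X)∩B_b^G(y)) elsewhere) satisfies ũ(y)² ≤ (C/|B_y^G(R)|)·Σ_{x∈B_y^G(R)} ũ(x)² for all y ∈ G and R ≥ R₀. -/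

import Mathlib

def IsRoughIsometryWith {X Y : Type*} (dX : X → X → ℝ) (dY : Y → Y → ℝ)
    (a b : ℝ) (φ : X → Y) : Prop :=
  (∀ x y : X, a⁻¹ * dX x y - b ≤ dY (φ x) (φ y) ∧
      dY (φ x) (φ y) ≤ a * dX x y + b) ∧
  ∀ z : Y, ∃ x : X, dY z (φ x) ≤ b

noncomputable def wordDist {G : Type*} [Group G] (S : Set G) (x y : G) : ℕ :=
  sInf {n | ∃ l : List G, l.length = n ∧ (∀ g ∈ l, g ∈ S) ∧ x * l.prod = y}

noncomputable def wball {G : Type*} [Group G] (S : Set G) (p : G) (n : ℕ) : Set G :=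
  {x : G | wordDist S p x ≤ n}

noncomputable def growth {G : Type*} [Group G] (S : Set G) (n : ℕ) : ℕ :=
  (wball S 1 n).ncard

/-- `u` is harmonic on the graph `X`. -/
def IsHarmonicGraph {V : Type*} (X : SimpleGraph V) (u : V → ℝ) : Prop :=
  ∀ v : V, ∑ᶠ w ∈ X.neighborSet v, (u w - u v) = 0

noncomputable def Wset {V G : Type*} [Group G] (φ : V → G) (S : Set G) (b : ℝ) (y : G) :
    Set V :=
  φ ⁻¹' (Set.range φ ∩ {z : G | (wordDist S y z : ℝ) ≤ b})

open scoped Classical in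
/-- The extension `ũ` of `u : V → ℝ` to `G`. -/
noncomputable def extendFun {V G : Type*} [Group G] (φ : V → G) (S : Set G) (b : ℝ)
    (u : V → ℝ) : G → ℝ := fun y =>
  if h : ∃ x, φ x = y then u h.choose
  else ((Wset φ S b y).ncard : ℝ)⁻¹ * ∑ᶠ x ∈ Wset φ S b y, u x

section Word
variable {G : Type*} [Group G] (S : Finset G)

lemma aux_exists_word (hSsym : ∀ s ∈ S, s⁻¹ ∈ S)
    (hSgen : Subgroup.closure (S : Set G) = ⊤) (x y : G) :
    ∃ l : List G, (∀ g ∈ l, g ∈ (S : Set G)) ∧ x * l.prod = y := by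
  have hx : x⁻¹ * y ∈ Subgroup.closure (S : Set G) := by rw [hSgen]; trivial
  have hunion : (S : Set G) ∪ (S : Set G)⁻¹ = (S : Set G) := by
    apply Set.union_eq_self_of_subset_right
    intro g hg
    have : g⁻¹ ∈ S := hg
    simpa using hSsym g⁻¹ this
  have hx' : x⁻¹ * y ∈ Submonoid.closure (S : Set G) := by
    have := hx
    rw [← Subgroup.mem_toSubmonoid, Subgroup.closure_toSubmonoid, hunion] at this
    exact this
  obtain ⟨l, hl, hprod⟩ := Submonoid.exists_list_of_mem_closure hx'
  exact ⟨l, hl, by rw [hprod]; group⟩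

lemma aux_wordDist_nonempty (hSsym : ∀ s ∈ S, s⁻¹ ∈ S)
    (hSgen : Subgroup.closure (S : Set G) = ⊤) (x y : G) :
    {n | ∃ l : List G, l.length = n ∧ (∀ g ∈ l, g ∈ (S : Set G)) ∧ x * l.prod = y}.Nonempty := by
  obtain ⟨l, hl, hp⟩ := aux_exists_word S hSsym hSgen x y
  exact ⟨l.length, l, rfl, hl, hp⟩

lemma aux_wordDist_le_iff (hSsym : ∀ s ∈ S, s⁻¹ ∈ S)
    (hSgen : Subgroup.closure (S : Set G) = ⊤) (x y : G) (n : ℕ) :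
    wordDist (S : Set G) x y ≤ n ↔
      ∃ l : List G, l.length ≤ n ∧ (∀ g ∈ l, g ∈ (S : Set G)) ∧ x * l.prod = y := by
  constructor
  · intro h
    obtain ⟨l, hlen, hmem, hp⟩ := Nat.sInf_mem (aux_wordDist_nonempty S hSsym hSgen x y)
    exact ⟨l, by rw [hlen]; exact h, hmem, hp⟩
  · rintro ⟨l, hlen, hmem, hp⟩
    exact le_trans (Nat.sInf_le ⟨l, rfl, hmem, hp⟩) hlen

lemma aux_wordDist_self (x : G) : wordDist (S : Set G) x x = 0 :=
  Nat.le_zero.mp (Nat.sInf_le ⟨[], rfl, by simp, by simp⟩)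

lemma aux_wordDist_triangle (hSsym : ∀ s ∈ S, s⁻¹ ∈ S)
    (hSgen : Subgroup.closure (S : Set G) = ⊤) (x y z : G) :
    wordDist (S : Set G) x z ≤ wordDist (S : Set G) x y + wordDist (S : Set G) y z := by
  obtain ⟨l₁, h1len, h1mem, h1p⟩ := Nat.sInf_mem (aux_wordDist_nonempty S hSsym hSgen x y)
  obtain ⟨l₂, h2len, h2mem, h2p⟩ := Nat.sInf_mem (aux_wordDist_nonempty S hSsym hSgen y z)
  apply Nat.sInf_le
  exact ⟨l₁ ++ l₂, by rw [List.length_append, h1len, h2len]; rfl, by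
    intro g hg; rcases List.mem_append.mp hg with h | h
    exacts [h1mem g h, h2mem g h], by rw [List.prod_append, ← mul_assoc, h1p, h2p]⟩

lemma aux_wordDist_symm (hSsym : ∀ s ∈ S, s⁻¹ ∈ S) (x y : G) :
    wordDist (S : Set G) x y = wordDist (S : Set G) y x := by
  have key : ∀ u v : G, ∀ n, (∃ l : List G, l.length = n ∧ (∀ g ∈ l, g ∈ (S : Set G)) ∧
      u * l.prod = v) → (∃ l : List G, l.length = n ∧ (∀ g ∈ l, g ∈ (S : Set G)) ∧
      v * l.prod = u) := by
    rintro u v n ⟨l, hlen, hmem, hp⟩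
    refine ⟨(l.map (fun g => g⁻¹)).reverse, by simp [hlen], ?_, ?_⟩
    · intro g hg
      simp only [List.mem_reverse, List.mem_map] at hg
      obtain ⟨h, hh, rfl⟩ := hg
      exact hSsym h (hmem h hh)
    · rw [← List.prod_inv_reverse, ← hp]; group
  unfold wordDist
  congr 1
  ext n
  exact ⟨key x y n, key y x n⟩

lemma aux_wball_finite (hSsym : ∀ s ∈ S, s⁻¹ ∈ S)
    (hSgen : Subgroup.closure (S : Set G) = ⊤) (y : G) (n : ℕ) :
    (wball (S : Set G) y n).Finite := by
  have : wball (S : Set G) y n ⊆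
      (fun l : List ↥S => y * (l.map Subtype.val).prod) '' {l | l.length ≤ n} := by
    intro z hz
    obtain ⟨l, hlen, hmem, hp⟩ := (aux_wordDist_le_iff S hSsym hSgen y z n).mp hz
    refine ⟨l.attach.map (fun g => (⟨g.1, hmem g.1 g.2⟩ : ↥S)), by simpa using hlen, ?_⟩
    simp only [List.map_map]
    simpa using hp
  exact ((List.finite_length_le ↥S n).image _).subset this

lemma aux_wball_nonempty (y : G) (n : ℕ) : y ∈ wball (S : Set G) y n := by
  simp [wball, aux_wordDist_self]

end Word

section Ext
variable {V G : Type*} [Group G] (S : Finset G)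

lemma aux_extend_apply (φ : V → G) (hinj : Function.Injective φ) (b : ℝ) (u : V → ℝ) (x : V) :
    extendFun φ (S : Set G) b u (φ x) = u x := by
  classical
  rw [extendFun]
  have h : ∃ x', φ x' = φ x := ⟨x, rfl⟩
  rw [dif_pos h]
  exact congrArg u (hinj h.choose_spec)

lemma aux_Wset_eq (φ : V → G) (b : ℝ) (y : G) :
    Wset φ (S : Set G) b y = {x : V | (wordDist (S : Set G) y (φ x) : ℝ) ≤ b} := by
  ext x
  simp [Wset, Set.mem_preimage]

/-- Pointwise comparison: `ũ(y)² ≤ u(p)²` for some `p` with `d(φ p, y) ≤ b`. -/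
lemma aux_key (hSsym : ∀ s ∈ S, s⁻¹ ∈ S) (hSgen : Subgroup.closure (S : Set G) = ⊤)
    (φ : V → G) (hinj : Function.Injective φ) (b : ℝ) (hb : 0 ≤ b)
    (hsurj : ∀ z : G, ∃ x : V, (wordDist (S : Set G) z (φ x) : ℝ) ≤ b)
    (u : V → ℝ) (y : G) :
    ∃ p : V, (wordDist (S : Set G) (φ p) y : ℝ) ≤ b ∧
      (extendFun φ (S : Set G) b u y) ^ 2 ≤ (u p) ^ 2 := by
  classical
  by_cases h : ∃ x, φ x = y
  · obtain ⟨x, hx⟩ := h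
    refine ⟨x, ?_, ?_⟩
    · rw [hx, aux_wordDist_self]; exact_mod_cast hb
    · rw [← hx, aux_extend_apply S φ hinj]
  · -- W is finite and nonempty
    have hWeq := aux_Wset_eq S φ b y
    have hWne : (Wset φ (S : Set G) b y).Nonempty := by
      obtain ⟨x, hx⟩ := hsurj y
      exact ⟨x, by rw [hWeq]; exact hx⟩
    have hWfin : (Wset φ (S : Set G) b y).Finite := by
      have hsub : Wset φ (S : Set G) b y ⊆ φ ⁻¹' (wball (S : Set G) y ⌈b⌉₊) := by
        intro x hx
        rw [hWeq] at hx
        have : (wordDist (S : Set G) y (φ x) : ℝ) ≤ ⌈b⌉₊ := le_trans hx (Nat.le_ceil b)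
        exact_mod_cast this
      exact Set.Finite.subset
        (Set.Finite.preimage (hinj.injOn) (aux_wball_finite S hSsym hSgen y ⌈b⌉₊)) hsub
    set W := Wset φ (S : Set G) b y with hW
    set t : Finset V := hWfin.toFinset with ht
    have htne : t.Nonempty := by
      rw [ht, Set.Finite.toFinset_nonempty]; exact hWne
    obtain ⟨x₀, hx₀W, hx₀max⟩ := t.exists_max_image (fun x => |u x|) htne
    refine ⟨x₀, ?_, ?_⟩
    · have : x₀ ∈ W := by rwa [ht, Set.Finite.mem_toFinset] at hx₀W
      rw [hWeq] at this
      rwa [aux_wordDist_symm S hSsym]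
    · rw [extendFun, dif_neg h]
      have hsum : ∑ᶠ x ∈ W, u x = ∑ x ∈ t, u x := by
        rw [ht]; exact finsum_mem_eq_finite_toFinset_sum u hWfin
      rw [hsum]
      have hcard : (W.ncard : ℝ) = (t.card : ℝ) := by
        rw [ht, Set.ncard_eq_toFinset_card _ hWfin]
      have habs : |(↑W.ncard : ℝ)⁻¹ * ∑ x ∈ t, u x| ≤ |u x₀| := by
        rw [abs_mul, hcard]
        have h1 : |∑ x ∈ t, u x| ≤ ∑ x ∈ t, |u x| := Finset.abs_sum_le_sum_abs _ _
        have h2 : ∑ x ∈ t, |u x| ≤ t.card * |u x₀| := by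
          calc ∑ x ∈ t, |u x| ≤ ∑ _x ∈ t, |u x₀| := Finset.sum_le_sum (fun i hi => hx₀max i hi)
          _ = t.card * |u x₀| := by rw [Finset.sum_const, nsmul_eq_mul]
        have hc0 : (0:ℝ) < t.card := by exact_mod_cast htne.card_pos
        rw [abs_inv, abs_of_nonneg (by positivity : (0:ℝ) ≤ (t.card:ℝ))]
        rw [inv_mul_le_iff₀ hc0]
        exact le_trans h1 h2
      calc ((↑W.ncard : ℝ)⁻¹ * ∑ x ∈ t, u x) ^ 2 = |(↑W.ncard : ℝ)⁻¹ * ∑ x ∈ t, u x| ^ 2 := (sq_abs _).symm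
      _ ≤ |u x₀| ^ 2 := by
          apply pow_le_pow_left₀ (abs_nonneg _) habs 2
      _ = (u x₀) ^ 2 := sq_abs _
end Ext

lemma aux_doubling_iter {G : Type*} [Group G] (S : Finset G)
    (hSsym : ∀ s ∈ S, s⁻¹ ∈ S) (hSgen : Subgroup.closure (S : Set G) = ⊤)
    (Cd : ℝ)
    (hdoubling : ∀ (y : G) (n : ℕ), 1 ≤ n →
      ((wball (S : Set G) y (2 * n)).ncard : ℝ) ≤ Cd * ((wball (S : Set G) y n).ncard : ℝ))
    (y : G) (j m : ℕ) (hm : 1 ≤ m) :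
    ((wball (S : Set G) y (2 ^ j * m)).ncard : ℝ) ≤
      (max Cd 1) ^ j * ((wball (S : Set G) y m).ncard : ℝ) := by
  induction j with
  | zero => simp
  | succ j ih =>
    have h1 : (2:ℕ) ^ (j+1) * m = 2 * (2 ^ j * m) := by ring
    have h2 : 1 ≤ 2 ^ j * m := Nat.one_le_iff_ne_zero.mpr (by positivity)
    calc ((wball (S : Set G) y (2 ^ (j+1) * m)).ncard : ℝ)
        = ((wball (S : Set G) y (2 * (2 ^ j * m))).ncard : ℝ) := by rw [h1]
      _ ≤ Cd * ((wball (S : Set G) y (2 ^ j * m)).ncard : ℝ) := hdoubling y _ h2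
      _ ≤ (max Cd 1) * ((max Cd 1) ^ j * ((wball (S : Set G) y m).ncard : ℝ)) := by
          apply mul_le_mul (le_max_left _ _) ih (Nat.cast_nonneg _)
          positivity
      _ = (max Cd 1) ^ (j+1) * ((wball (S : Set G) y m).ncard : ℝ) := by ring

lemma aux_wball_mono {G : Type*} [Group G] (S : Finset G) (y : G) {m n : ℕ} (h : m ≤ n) :
    wball (S : Set G) y m ⊆ wball (S : Set G) y n :=
  fun _ hz => le_trans hz h

/-- Mean value inequality in the large for the extended function `ũ`. -/
theorem mean_value_inequality_in_the_large {V G : Type*} [Group G]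
    (X : SimpleGraph V) (hconn : X.Connected) (Δ : ℕ) (hΔ : 2 ≤ Δ)
    (hdeg : ∀ v : V, (X.neighborSet v).ncard ≤ Δ)
    (S : Finset G) (hSsym : ∀ s ∈ S, s⁻¹ ∈ S)
    (hSgen : Subgroup.closure (S : Set G) = ⊤)
    (D : ℕ) (c₁ c₂ : ℝ) (hc₁ : 0 < c₁) (hc₂ : 0 < c₂)
    (hpoly : ∀ n : ℕ, 1 ≤ n →
      c₁ * (n : ℝ) ^ D ≤ (growth (S : Set G) n : ℝ) ∧
      (growth (S : Set G) n : ℝ) ≤ c₂ * (n : ℝ) ^ D)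
    (a b : ℝ) (ha : 1 ≤ a) (hb : 0 ≤ b)
    (φ : V → G) (hinj : Function.Injective φ)
    (hφ : IsRoughIsometryWith (fun x y => (X.dist x y : ℝ))
      (fun x y => (wordDist (S : Set G) x y : ℝ)) a b φ)
    -- (i) mean value inequality for harmonic functions on X
    (C₁ : ℝ) (hC₁ : 0 < C₁)
    (hMVIX : ∀ (u : V → ℝ), IsHarmonicGraph X u → ∀ (p : V) (R : ℕ), 1 ≤ R →
      (u p) ^ 2 ≤ C₁ / ({x : V | X.dist p x ≤ R}.ncard : ℝ) *
        ∑ᶠ x ∈ {x : V | X.dist p x ≤ R}, (u x) ^ 2)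
    -- (ii) volume comparison between balls in X and in G
    (C₁' C₂' : ℝ) (hC₁' : 0 < C₁') (hC₁'1 : C₁' < 1) (hC₂' : 0 < C₂') (R₁ : ℕ)
    (hVC : ∀ (y : G) (p : V), (wordDist (S : Set G) (φ p) y : ℝ) ≤ b →
      ∀ R : ℕ, R₁ ≤ R →
      C₂' * ((wball (S : Set G) y ⌊C₁' * (R : ℝ)⌋₊).ncard : ℝ) ≤
        ({x : V | X.dist p x ≤ R}.ncard : ℝ))
    -- (iii) volume doubling on G
    (Cd : ℝ) (hCd : 0 < Cd)
    (hdoubling : ∀ (y : G) (n : ℕ), 1 ≤ n →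
      ((wball (S : Set G) y (2 * n)).ncard : ℝ) ≤ Cd * ((wball (S : Set G) y n).ncard : ℝ)) :
    ∃ (C : ℝ) (R₀ : ℕ), 0 < C ∧ 1 ≤ R₀ ∧
      ∀ (u : V → ℝ), IsHarmonicGraph X u → ∀ (y : G) (R : ℕ), R₀ ≤ R →
        (extendFun φ (S : Set G) b u y) ^ 2 ≤
          C / ((wball (S : Set G) y R).ncard : ℝ) *
            ∑ᶠ x ∈ wball (S : Set G) y R, (extendFun φ (S : Set G) b u x) ^ 2 := by
  classical
  have ha0 : (0:ℝ) < a := lt_of_lt_of_le one_pos ha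
  obtain ⟨k, hk⟩ := pow_unbounded_of_one_lt (R := ℝ) (8 * a / C₁') one_lt_two
  set Cd' : ℝ := max Cd 1 with hCd'def
  have hCd'1 : (1:ℝ) ≤ Cd' := le_max_right _ _
  have hCd'0 : (0:ℝ) < Cd' := lt_of_lt_of_le one_pos hCd'1
  refine ⟨C₁ * Cd' ^ k / C₂',
    ⌈2 * a * ((R₁:ℝ) + 2 + 1 / C₁') + 4 * b + 8 * a / C₁'⌉₊ + 1, by positivity,
    Nat.le_add_left 1 _, ?_⟩
  intro u hu y R hR
  -- numeric setup
  have hRreal : 2 * a * ((R₁:ℝ) + 2 + 1 / C₁') + 4 * b + 8 * a / C₁' + 1 ≤ (R:ℝ) := by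
    have h1 := Nat.le_ceil (2 * a * ((R₁:ℝ) + 2 + 1 / C₁') + 4 * b + 8 * a / C₁')
    have h2 : ((⌈2 * a * ((R₁:ℝ) + 2 + 1 / C₁') + 4 * b + 8 * a / C₁'⌉₊ + 1 : ℕ) : ℝ) ≤ R := by
      exact_mod_cast hR
    push_cast at h2
    linarith
  have hbR : 4 * b ≤ (R:ℝ) := by
    have h1 : (0:ℝ) ≤ 2 * a * ((R₁:ℝ) + 2 + 1 / C₁') := by positivity
    have h2 : (0:ℝ) ≤ 8 * a / C₁' := by positivity
    linarith
  have hCR : 8 * a ≤ C₁' * R := by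
    have h1 : (0:ℝ) ≤ 2 * a * ((R₁:ℝ) + 2 + 1 / C₁') := by positivity
    have h3 : 8 * a / C₁' ≤ (R:ℝ) := by linarith
    calc 8 * a = (8 * a / C₁') * C₁' := by field_simp
      _ ≤ (R:ℝ) * C₁' := mul_le_mul_of_nonneg_right h3 hC₁'.le
      _ = C₁' * R := mul_comm _ _
  set R' : ℕ := ⌊(R:ℝ) / (2 * a)⌋₊ with hR'def
  have hR'le : (R':ℝ) ≤ (R:ℝ) / (2 * a) := Nat.floor_le (by positivity)
  have hR'gt : (R:ℝ) / (2 * a) - 1 < (R':ℝ) := Nat.sub_one_lt_floor _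
  have hdivlb : (R₁:ℝ) + 2 + 1 / C₁' ≤ (R:ℝ) / (2 * a) := by
    rw [le_div_iff₀ (by positivity)]
    have e : ((R₁:ℝ) + 2 + 1 / C₁') * (2 * a) = 2 * a * ((R₁:ℝ) + 2 + 1 / C₁') := by ring
    have h2 : (0:ℝ) ≤ 8 * a / C₁' := by positivity
    linarith
  have hR'R₁real : (R₁:ℝ) + 1 + 1 / C₁' < (R':ℝ) := by linarith
  have hR'R₁ : R₁ ≤ R' := by
    have : (R₁:ℝ) < (R':ℝ) := by
      have : (0:ℝ) < 1 / C₁' := by positivity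
      linarith
    exact_mod_cast this.le
  have hR'1 : 1 ≤ R' := by
    have : (1:ℝ) ≤ (R':ℝ) := by
      have h0 : (0:ℝ) ≤ (R₁:ℝ) := Nat.cast_nonneg _
      have : (0:ℝ) < 1 / C₁' := by positivity
      linarith
    exact_mod_cast this
  have hm1 : (1:ℝ) ≤ C₁' * (R':ℝ) := by
    have h1C : 1 / C₁' < (R':ℝ) := by
      have h0 : (0:ℝ) ≤ (R₁:ℝ) := Nat.cast_nonneg _
      linarith
    calc (1:ℝ) = C₁' * (1 / C₁') := by field_simp
      _ ≤ C₁' * (R':ℝ) := mul_le_mul_of_nonneg_left h1C.le hC₁'.le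
  set m : ℕ := ⌊C₁' * ((R':ℕ):ℝ)⌋₊ with hmdef
  have hm : 1 ≤ m := Nat.le_floor (by exact_mod_cast hm1)
  have hmgt : C₁' * (R':ℝ) - 1 < (m:ℝ) := Nat.sub_one_lt_floor _
  have hmlow : C₁' * (R:ℝ) / (4 * a) ≤ (m:ℝ) := by
    rw [div_le_iff₀ (by positivity)]
    have h2'' : (R:ℝ) < ((R':ℝ) + 1) * (2 * a) := by
      rw [← div_lt_iff₀ (by positivity)]
      linarith
    nlinarith [hC₁'.le, hC₁'1, ha, hCR, hmgt, h2'']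
  have hγ : a * (R':ℝ) + 2 * b ≤ (R:ℝ) := by
    have h1 : a * (R':ℝ) ≤ a * ((R:ℝ) / (2 * a)) := mul_le_mul_of_nonneg_left hR'le ha0.le
    have h2 : a * ((R:ℝ) / (2 * a)) = (R:ℝ) / 2 := by field_simp
    linarith
  have hRm : R ≤ 2 ^ k * m := by
    have hreal : (R:ℝ) ≤ (2:ℝ) ^ k * (m:ℝ) := by
      have h1 : (8 * a / C₁') * (C₁' * (R:ℝ) / (4 * a)) ≤ (2:ℝ) ^ k * (m:ℝ) :=
        mul_le_mul hk.le hmlow (by positivity) (by positivity)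
      have h2 : (8 * a / C₁') * (C₁' * (R:ℝ) / (4 * a)) = 2 * (R:ℝ) := by
        field_simp; ring
      have h3 : (0:ℝ) ≤ (R:ℝ) := Nat.cast_nonneg _
      linarith
    exact_mod_cast hreal
  -- pointwise bound
  have hsurj : ∀ z : G, ∃ x : V, (wordDist (S : Set G) z (φ x) : ℝ) ≤ b := hφ.2
  obtain ⟨p, hpb, hpkey⟩ := aux_key S hSsym hSgen φ hinj b hb hsurj u y
  -- the X-ball
  set BX : Set V := {x : V | X.dist p x ≤ R'} with hBXdef
  set BG : Set G := wball (S : Set G) y R with hBGdef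
  have hBGfin : BG.Finite := aux_wball_finite S hSsym hSgen y R
  have hmap : ∀ x ∈ BX, φ x ∈ BG := by
    intro x hx
    have hxd : X.dist p x ≤ R' := hx
    have h1 : (wordDist (S : Set G) (φ p) (φ x) : ℝ) ≤ a * (X.dist p x : ℝ) + b :=
      (hφ.1 p x).2
    have h2 : a * (X.dist p x : ℝ) ≤ a * (R':ℝ) := by
      apply mul_le_mul_of_nonneg_left _ ha0.le
      exact_mod_cast hxd
    have h3 : (wordDist (S : Set G) y (φ x) : ℝ) ≤
        (wordDist (S : Set G) y (φ p) : ℝ) + (wordDist (S : Set G) (φ p) (φ x) : ℝ) := by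
      exact_mod_cast aux_wordDist_triangle S hSsym hSgen y (φ p) (φ x)
    have h4 : (wordDist (S : Set G) y (φ p) : ℝ) ≤ b := by
      rw [← aux_wordDist_symm S hSsym]
      exact hpb
    have h5 : (wordDist (S : Set G) y (φ x) : ℝ) ≤ (R:ℝ) := by linarith
    have : wordDist (S : Set G) y (φ x) ≤ R := by exact_mod_cast h5
    exact this
  have hBXfin : BX.Finite := by
    have hsub : BX ⊆ φ ⁻¹' BG := fun x hx => hmap x hx
    exact (hBGfin.preimage hinj.injOn).subset hsub
  -- sums
  set ut : G → ℝ := extendFun φ (S : Set G) b u with hutdef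
  have hsumX : ∑ᶠ x ∈ BX, (u x) ^ 2 = ∑ x ∈ hBXfin.toFinset, (u x) ^ 2 :=
    finsum_mem_eq_finite_toFinset_sum _ hBXfin
  have hsumG : ∑ᶠ z ∈ BG, (ut z) ^ 2 = ∑ z ∈ hBGfin.toFinset, (ut z) ^ 2 :=
    finsum_mem_eq_finite_toFinset_sum _ hBGfin
  have hSX0 : 0 ≤ ∑ᶠ x ∈ BX, (u x) ^ 2 := by
    rw [hsumX]; exact Finset.sum_nonneg (fun i _ => sq_nonneg _)
  have hsumle : ∑ᶠ x ∈ BX, (u x) ^ 2 ≤ ∑ᶠ z ∈ BG, (ut z) ^ 2 := by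
    rw [hsumX, hsumG]
    have himg : ∑ x ∈ hBXfin.toFinset, (u x) ^ 2 =
        ∑ z ∈ hBXfin.toFinset.image φ, (ut z) ^ 2 := by
      rw [Finset.sum_image (fun x _ x' _ h => hinj h)]
      apply Finset.sum_congr rfl
      intro x _
      rw [hutdef, aux_extend_apply S φ hinj]
    rw [himg]
    apply Finset.sum_le_sum_of_subset_of_nonneg
    · intro z hz
      simp only [Finset.mem_image, Set.Finite.mem_toFinset] at hz ⊢
      obtain ⟨x, hx, rfl⟩ := hz
      exact hmap x hx
    · intro _ _ _; exact sq_nonneg _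
  -- ncard estimates
  have hBm_pos : (0:ℝ) < ((wball (S : Set G) y m).ncard : ℝ) := by
    have hfin := aux_wball_finite S hSsym hSgen y m
    have : 0 < (wball (S : Set G) y m).ncard :=
      (Set.ncard_pos hfin).mpr ⟨y, aux_wball_nonempty S y m⟩
    exact_mod_cast this
  have hVC' : C₂' * ((wball (S : Set G) y m).ncard : ℝ) ≤ (BX.ncard : ℝ) :=
    hVC y p hpb R' hR'R₁
  have hBX_pos : (0:ℝ) < (BX.ncard : ℝ) := lt_of_lt_of_le (by positivity) hVC'
  have hBG_pos : (0:ℝ) < (BG.ncard : ℝ) := by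
    have : 0 < BG.ncard := (Set.ncard_pos hBGfin).mpr ⟨y, aux_wball_nonempty S y R⟩
    exact_mod_cast this
  have hBG_le : (BG.ncard : ℝ) ≤ Cd' ^ k * ((wball (S : Set G) y m).ncard : ℝ) := by
    have h1 : (BG.ncard : ℝ) ≤ ((wball (S : Set G) y (2 ^ k * m)).ncard : ℝ) := by
      have := Set.ncard_le_ncard (aux_wball_mono S y hRm)
        (aux_wball_finite S hSsym hSgen y (2 ^ k * m))
      exact_mod_cast this
    exact le_trans h1 (aux_doubling_iter S hSsym hSgen Cd hdoubling y k m hm)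
  -- final chain
  have hMVI := hMVIX u hu p R' hR'1
  have hcoef : C₁ / (BX.ncard : ℝ) ≤
      (C₁ * Cd' ^ k / C₂') / ((BG.ncard : ℝ)) := by
    rw [div_le_div_iff₀ hBX_pos hBG_pos]
    have h1 : C₁ * (BG.ncard : ℝ) ≤ C₁ * (Cd' ^ k * ((wball (S : Set G) y m).ncard : ℝ)) :=
      mul_le_mul_of_nonneg_left hBG_le hC₁.le
    have h2 : C₁ * Cd' ^ k / C₂' * (C₂' * ((wball (S : Set G) y m).ncard : ℝ)) =
        C₁ * (Cd' ^ k * ((wball (S : Set G) y m).ncard : ℝ)) := by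
      field_simp
    have h3 : C₁ * Cd' ^ k / C₂' * (C₂' * ((wball (S : Set G) y m).ncard : ℝ)) ≤
        C₁ * Cd' ^ k / C₂' * (BX.ncard : ℝ) := by
      apply mul_le_mul_of_nonneg_left hVC' (by positivity)
    linarith
  calc (ut y) ^ 2 ≤ (u p) ^ 2 := hpkey
    _ ≤ C₁ / (BX.ncard : ℝ) * ∑ᶠ x ∈ BX, (u x) ^ 2 := hMVI
    _ ≤ (C₁ * Cd' ^ k / C₂') / ((BG.ncard : ℝ)) * ∑ᶠ z ∈ BG, (ut z) ^ 2 := by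
        apply mul_le_mul hcoef hsumle hSX0 (by positivity)
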